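/- For every x ∈ ℝ^n, the Jacobian matrix (dF/dx)(x) satisfies (dF/dx)(x) · 1_n = 1_n, i.e. 1_n is an eigenvector of (dF/dx)(x) with eigenvalue 1. -/

import Mathlib

open Finset Matrix

/-- The all-ones vector is an eigenvector of the Jacobian of the Sinkhorn map `F`
with eigenvalue `1`: `(dF/dx)(x) · 1ₙ = 1ₙ`. -/
theorem ones_eigenvector_of_sinkhorn_jacobian
    (n m : ℕ) (hn : 0 < n) (hm : 0 < m)
    (a : Fin n → ℝ) (b : Fin m → ℝ) (K : Matrix (Fin n) (Fin m) ℝ)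
    (ha_pos : ∀ i, 0 < a i) (ha_sum : ∑ i, a i = 1)
    (hb_pos : ∀ j, 0 < b j) (hb_sum : ∑ j, b j = 1)
    (hK_pos : ∀ i j, 0 < K i j)
    (F : (Fin n → ℝ) → Fin n → ℝ)
    (hF : ∀ x i, F x i = Real.log (a i) -
      Real.log (∑ j, K i j * (b j / ∑ i', K i' j * Real.exp (x i'))))
    (J : (Fin n → ℝ) → Matrix (Fin n) (Fin n) ℝ)
    (hJ : ∀ x j i, J x j i = fderiv ℝ F x (Pi.single i 1) j) :
    ∀ x : Fin n → ℝ, (J x).mulVec (fun _ => 1) = fun _ => 1 := by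
  have hne : Nonempty (Fin n) := Fin.pos_iff_nonempty.mp hn
  have hme : Nonempty (Fin m) := Fin.pos_iff_nonempty.mp hm
  have hFeq : F = fun x i => Real.log (a i) -
      Real.log (∑ j, K i j * (b j / ∑ i', K i' j * Real.exp (x i'))) := by
    funext x i; exact hF x i
  subst hFeq
  set v : Fin n → ℝ := fun _ => 1 with hv
  -- positivity
  have hTpos : ∀ (j : Fin m) (x : Fin n → ℝ), 0 < ∑ i', K i' j * Real.exp (x i') :=
    fun j x => Finset.sum_pos (fun i' _ => mul_pos (hK_pos i' j) (Real.exp_pos _))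
      Finset.univ_nonempty
  have hSpos : ∀ (i : Fin n) (x : Fin n → ℝ),
      0 < ∑ j, K i j * (b j / ∑ i', K i' j * Real.exp (x i')) :=
    fun i x => Finset.sum_pos (fun j _ => mul_pos (hK_pos i j)
      (div_pos (hb_pos j) (hTpos j x))) Finset.univ_nonempty
  -- differentiability componentwise
  have hdiff : ∀ (x : Fin n → ℝ),
      DifferentiableAt ℝ (fun x : Fin n → ℝ => fun i => Real.log (a i) -
        Real.log (∑ j, K i j * (b j / ∑ i', K i' j * Real.exp (x i')))) x := by
    intro x
    rw [differentiableAt_pi]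
    intro i
    have hSdiff : DifferentiableAt ℝ
        (fun y : Fin n → ℝ => ∑ j, K i j * (b j / ∑ i', K i' j * Real.exp (y i'))) x := by
      apply DifferentiableAt.fun_sum
      intro j _
      have hTdiff : DifferentiableAt ℝ
          (fun y : Fin n → ℝ => ∑ i', K i' j * Real.exp (y i')) x := by
        apply DifferentiableAt.fun_sum
        intro i' _
        exact (differentiableAt_const _).mul (Real.differentiable_exp.differentiableAt.comp x
          (differentiableAt_apply i' x))
      have hq : DifferentiableAt ℝ
          (fun y : Fin n → ℝ => b j / ∑ i', K i' j * Real.exp (y i')) x :=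
 by
        simp only [div_eq_mul_inv]
        exact (hTdiff.inv (ne_of_gt (hTpos j x))).const_mul (b j)
      exact (differentiableAt_const _).mul hq
    exact (differentiableAt_const _).sub (hSdiff.log (ne_of_gt (hSpos i x)))
  -- translation identity
  have key : ∀ (x : Fin n → ℝ) (t : ℝ) (i : Fin n),
      (fun x i => Real.log (a i) -
        Real.log (∑ j, K i j * (b j / ∑ i', K i' j * Real.exp (x i')))) (x + t • v) i
      = Real.log (a i) -
        Real.log (∑ j, K i j * (b j / ∑ i', K i' j * Real.exp (x i'))) + t := by
    intro x t i
    have hT : ∀ j : Fin m, (∑ i', K i' j * Real.exp ((x + t • v) i'))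
        = Real.exp t * ∑ i', K i' j * Real.exp (x i') := by
      intro j
      rw [Finset.mul_sum]
      refine Finset.sum_congr rfl fun i' _ => ?_
      simp [hv, Real.exp_add]
      ring
    have hS : (∑ j, K i j * (b j / ∑ i', K i' j * Real.exp ((x + t • v) i')))
        = (∑ j, K i j * (b j / ∑ i', K i' j * Real.exp (x i'))) / Real.exp t := by
      rw [Finset.sum_div]
      refine Finset.sum_congr rfl fun j _ => ?_
      rw [hT j, mul_comm (Real.exp t), div_mul_eq_div_div, mul_div_assoc]
    simp only [hS]
    rw [Real.log_div (ne_of_gt (hSpos i x)) (Real.exp_ne_zero t), Real.log_exp]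
    ring
  intro x
  -- directional derivative along v is v
  have hcurve : HasDerivAt (fun t : ℝ => x + t • v) v 0 := by
    simpa using ((hasDerivAt_id (0:ℝ)).smul_const v).const_add x
  have hcomp := (hdiff x).hasFDerivAt.comp_hasDerivAt_of_eq 0 hcurve (by simp)
  have hconst : HasDerivAt (fun t : ℝ => (fun x i => Real.log (a i) -
      Real.log (∑ j, K i j * (b j / ∑ i', K i' j * Real.exp (x i')))) (x + t • v)) v 0 := by
    have : (fun t : ℝ => (fun x i => Real.log (a i) -
        Real.log (∑ j, K i j * (b j / ∑ i', K i' j * Real.exp (x i')))) (x + t • v))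
        = fun t : ℝ => (fun i => Real.log (a i) -
          Real.log (∑ j, K i j * (b j / ∑ i', K i' j * Real.exp (x i')))) + t • v := by
      funext t
      funext i
      simpa [hv] using key x t i
    rw [this]
    simpa using ((hasDerivAt_id (0:ℝ)).smul_const v).const_add (fun i => Real.log (a i) -
          Real.log (∑ j, K i j * (b j / ∑ i', K i' j * Real.exp (x i'))))
  have hdir : fderiv ℝ (fun x i => Real.log (a i) -
      Real.log (∑ j, K i j * (b j / ∑ i', K i' j * Real.exp (x i')))) x v = v := by
    have := hcomp.unique hconst
    simpa using this
  funext j0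
  simp only [Matrix.mulVec, dotProduct, hv, mul_one]
  have : ∑ i, J x j0 i = fderiv ℝ (fun x i => Real.log (a i) -
      Real.log (∑ j, K i j * (b j / ∑ i', K i' j * Real.exp (x i')))) x v j0 := by
    simp only [hJ]
    rw [show v = ∑ i, Pi.single i (1:ℝ) by
      rw [Finset.univ_sum_single (f := v)]]
    rw [map_sum]
    rw [Finset.sum_apply]
  rw [this, hdir]
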